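/- arXiv:2509.12360 — 2 statements merged into one kernel-verified Lean document; each statement's English description precedes it below -/
import Mathlib

section
/- Let f : S → T be a minor embedding of rooted trees. If a, b ∈ V(S) and there is no directed path between a and b in S (in either direction), then there is no directed path between f(a) and f(b) in T (in either direction). -/
/-- A directed path in a graph `E`, given as a nonempty list of visited nodes
from `a` to `b` (endpoints included). A trivial path is `[a]` with `a = b`. -/
def IsPath {V : Type*} (E : V → V → Prop) (p : List V) (a b : V) : Prop :=
  p.Chain' E ∧ p.head? = some a ∧ p.getLast? = some b

/-- There is a (possibly trivial) directed path from `a` to `b`. -/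
def Reach {V : Type*} (E : V → V → Prop) (a b : V) : Prop :=
  ∃ p : List V, IsPath E p a b

/-- A rooted tree: a finite directed graph with root `r` such that every node is
reachable from `r` by a unique directed path (and there are no self-loops). -/
structure IsRootedTree {V : Type*} [Fintype V] (E : V → V → Prop) (r : V) : Prop where
  no_self : ∀ v, ¬ E v v
  reach : ∀ v, ∃ p : List V, IsPath E p r v
  path_unique : ∀ v (p q : List V), IsPath E p r v → IsPath E q r v → p = q

/-- A minor embedding `f : S → T`: an injective node map such that every arc `(a,b)`
of `S` maps to a directed path from `f a` to `f b` in `T` with no intermediate node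
in the image of `f`. -/
def IsMinorEmb {V W : Type*} (ES : V → V → Prop) (ET : W → W → Prop) (f : V → W) : Prop :=
  Function.Injective f ∧
    ∀ a b, ES a b → ∃ p : List W, IsPath ET p (f a) (f b) ∧
      ∀ x ∈ p.tail.dropLast, x ∉ Set.range f

section Aux
variable {V : Type*} {E : V → V → Prop}

lemma isPath_singleton (E : V → V → Prop) (a : V) : IsPath E [a] a a :=
  ⟨List.isChain_singleton a, rfl, rfl⟩

lemma isPath_append {p q : List V} {a b c : V}
    (hp : IsPath E p a b) (hq : IsPath E q b c) : IsPath E (p ++ q.tail) a c := by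
  obtain ⟨hc, hh, hl⟩ := hp
  obtain ⟨hc', hh', hl'⟩ := hq
  cases q with
  | nil => simp at hh'
  | cons qh qt =>
    have hqh : qh = b := by simpa using hh'
    subst hqh
    cases qt with
    | nil =>
      have hbc : qh = c := by simpa using hl'
      simpa using ⟨hc, hh, hbc ▸ hl⟩
    | cons q1 qt' =>
      cases p with
      | nil => simp at hh
      | cons ph pt =>
        refine ⟨?_, ?_, ?_⟩
        · rw [List.Chain', List.isChain_append]
          refine ⟨hc, hc'.tail, ?_⟩
          intro x hx y hy
          rw [hl] at hx
          simp at hx hy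
          subst hx; subst hy
          exact (List.isChain_cons_cons.1 hc').1
        · simpa using hh
        · show ((ph :: pt) ++ (q1 :: qt')).getLast? = some c
          rw [List.getLast?_append_cons]
          rw [List.getLast?_cons_cons] at hl'
          exact hl'

lemma reach_trans {a b c : V} (h1 : Reach E a b) (h2 : Reach E b c) : Reach E a c := by
  obtain ⟨p, hp⟩ := h1; obtain ⟨q, hq⟩ := h2
  exact ⟨_, isPath_append hp hq⟩

lemma reach_of_mem : ∀ {p : List V} {a b x : V}, IsPath E p a b → x ∈ p → Reach E x b := by
  intro p
  induction p with
  | nil => intro a b x h hx; simp at hx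
  | cons hd t ih =>
    intro a b x hp hx
    rcases List.mem_cons.1 hx with rfl | hx
    · exact ⟨x :: t, hp.1, rfl, hp.2.2⟩
    · cases t with
      | nil => simp at hx
      | cons h' t' =>
        exact ih (a := h') (b := b)
          ⟨hp.1.tail, rfl, by simpa [List.getLast?_cons_cons] using hp.2.2⟩ hx

lemma mem_path_cases {p : List V} {u v x : V} (hh : p.head? = some u)
    (hl : p.getLast? = some v) (hx : x ∈ p) : x = u ∨ x = v ∨ x ∈ p.tail.dropLast := by
  cases p with
  | nil => simp at hx
  | cons h t =>
    have : h = u := by simpa using hh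
    subst this
    rcases List.mem_cons.1 hx with rfl | hx
    · exact Or.inl rfl
    cases ht : t with
    | nil => subst ht; simp at hx
    | cons a s =>
      subst ht
      have hne : (a :: s) ≠ ([] : List V) := by simp
      have hv : (a :: s).getLast hne = v := by
        have h2 := List.getLast?_eq_getLast (l := a :: s) hne
        rw [List.getLast?_cons_cons] at hl
        rw [h2] at hl
        exact Option.some.inj hl
      have hsplit := List.dropLast_append_getLast hne
      rw [← hsplit] at hx
      rcases List.mem_append.1 hx with h1 | h1
      · exact Or.inr (Or.inr h1)
      · exact Or.inr (Or.inl (by simpa [hv] using h1))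

lemma reach_antisymm {V : Type*} [Fintype V] {E : V → V → Prop} {r : V}
    (hT : IsRootedTree E r) {u v : V} (h1 : Reach E u v) (h2 : Reach E v u) : u = v := by
  obtain ⟨p, hp⟩ := hT.reach u
  obtain ⟨q, hq⟩ := h1
  obtain ⟨s, hs⟩ := h2
  have hbig : IsPath E ((p ++ q.tail) ++ s.tail) r u := isPath_append (isPath_append hp hq) hs
  have heq := hT.path_unique u _ _ hp hbig
  cases q with
  | nil => simp [IsPath] at hq
  | cons qh qt =>
    have hlen := congrArg List.length heq
    simp [List.length_append] at hlen
    obtain ⟨hqt, -⟩ := hlen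
    subst hqt
    have h1 : qh = u := by simpa using hq.2.1
    have h2 : qh = v := by simpa using hq.2.2
    rw [← h1, h2]

end Aux

section Emb
variable {VS VT : Type*} {ES : VS → VS → Prop} {ET : VT → VT → Prop} {f : VS → VT}

lemma reach_map (hf : IsMinorEmb ES ET f) :
    ∀ {p : List VS} {a b : VS}, IsPath ES p a b → Reach ET (f a) (f b) := by
  intro p
  induction p with
  | nil => intro a b h; simp [IsPath] at h
  | cons h t ih =>
    intro a b hp
    have hha : h = a := by simpa using hp.2.1
    subst hha
    cases t with
    | nil =>
      have : h = b := by simpa using hp.2.2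
      subst this
      exact ⟨[f h], isPath_singleton ET (f h)⟩
    | cons h' t' =>
      have harc : ES h h' := (List.isChain_cons_cons.1 hp.1).1
      obtain ⟨seg, hseg, _⟩ := hf.2 h h' harc
      have hrest : Reach ET (f h') (f b) :=
        ih ⟨hp.1.tail, rfl, by simpa [List.getLast?_cons_cons] using hp.2.2⟩
      exact reach_trans ⟨seg, hseg⟩ hrest

lemma emb_path (hf : IsMinorEmb ES ET f) :
    ∀ {s : List VS} {c b : VS}, IsPath ES s c b →
      ∃ W : List VT, IsPath ET W (f c) (f b) ∧
        ∀ x ∈ W, x ∈ Set.range f → ∃ d ∈ s, x = f d := by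
  intro s
  induction s with
  | nil => intro c b h; simp [IsPath] at h
  | cons h t ih =>
    intro c b hp
    have hhc : h = c := by simpa using hp.2.1
    subst hhc
    cases t with
    | nil =>
      have : h = b := by simpa using hp.2.2
      subst this
      exact ⟨[f h], isPath_singleton ET (f h), by intro x hx _; simp at hx; exact ⟨h, by simp, hx⟩⟩
    | cons h' t' =>
      have harc : ES h h' := (List.isChain_cons_cons.1 hp.1).1
      obtain ⟨seg, hseg, hint⟩ := hf.2 h h' harc
      obtain ⟨W', hW', hmem⟩ :=
        ih (c := h') (b := b) ⟨hp.1.tail, rfl, by simpa [List.getLast?_cons_cons] using hp.2.2⟩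
      refine ⟨seg ++ W'.tail, isPath_append hseg hW', ?_⟩
      intro x hx hxr
      rcases List.mem_append.1 hx with h1 | h1
      · rcases mem_path_cases hseg.2.1 hseg.2.2 h1 with rfl | h2 | h2
        · exact ⟨h, by simp, rfl⟩
        · exact ⟨h', by simp, h2⟩
        · exact absurd hxr (hint x h2)
      · obtain ⟨d, hd, hfd⟩ := hmem x (List.mem_of_mem_tail h1) hxr
        exact ⟨d, by simp [hd], hfd⟩

lemma reach_pull {VS VT : Type*} [Fintype VS] [Fintype VT]
    {ES : VS → VS → Prop} {rS : VS} {ET : VT → VT → Prop} {rT : VT}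
    (hS : IsRootedTree ES rS) (hT : IsRootedTree ET rT)
    {f : VS → VT} (hf : IsMinorEmb ES ET f)
    {a b : VS} (h : Reach ET (f a) (f b)) : Reach ES a b := by
  obtain ⟨sb, hsb⟩ := hS.reach b
  obtain ⟨W, hW, hWmem⟩ := emb_path hf hsb
  obtain ⟨R, hR⟩ := hT.reach (f rS)
  obtain ⟨R', hR'⟩ := hT.reach (f a)
  obtain ⟨P, hP⟩ := h
  have hQ : IsPath ET (R ++ W.tail) rT (f b) := isPath_append hR hW
  have hQ' : IsPath ET (R' ++ P.tail) rT (f b) := isPath_append hR' hP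
  have heq := hT.path_unique (f b) _ _ hQ hQ'
  have hfaR' : f a ∈ R' := by
    cases R' with
    | nil => simp [IsPath] at hR'
    | cons x t =>
      have := hR'.2.2
      rw [List.getLast?_eq_getLast (l := x :: t) (by simp)] at this
      have := Option.some.inj this
      rw [← this]
      exact List.getLast_mem _
  have hfaQ : f a ∈ R ++ W.tail := by
    rw [heq]; exact List.mem_append_left _ hfaR'
  rcases List.mem_append.1 hfaQ with h1 | h1
  · have h3 : Reach ET (f a) (f rS) := reach_of_mem hR h1
    obtain ⟨sa, hsa⟩ := hS.reach a
    have h4 : Reach ET (f rS) (f a) := reach_map hf hsa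
    have h5 : f a = f rS := reach_antisymm hT h3 h4
    have h6 : a = rS := hf.1 h5
    subst h6
    exact ⟨sb, hsb⟩
  · obtain ⟨d, hd, hfd⟩ := hWmem (f a) (List.mem_of_mem_tail h1) ⟨a, rfl⟩
    have : a = d := hf.1 hfd
    subst this
    exact reach_of_mem hsb hd

end Emb

/-- Lemma 4: a minor embedding maps incomparable nodes to incomparable nodes.
If there is no directed path between `a` and `b` in `S` (in either direction),
then there is no directed path between `f a` and `f b` in `T` (in either direction). -/
theorem stmt4 {VS VT : Type*} [Fintype VS] [Fintype VT]
    (ES : VS → VS → Prop) (rS : VS) (ET : VT → VT → Prop) (rT : VT)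
    (hS : IsRootedTree ES rS) (hT : IsRootedTree ET rT)
    (f : VS → VT) (hf : IsMinorEmb ES ET f)
    (a b : VS) (hab : ¬ Reach ES a b) (hba : ¬ Reach ES b a) :
    ¬ Reach ET (f a) (f b) ∧ ¬ Reach ET (f b) (f a) :=
  ⟨fun h => hab (reach_pull hS hT hf h), fun h => hba (reach_pull hS hT hf h)⟩
end

section
/- For any two nonempty rooted trees T₁ and T₂, a smallest common supertree T_σ under minor embeddings satisfies |V(T_σ)| ≤ |V(T₁)| + |V(T₂)| + 1. -/
/-- There is a common minor of `T₁` and `T₂` with `n` nodes. -/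
def CommonMinorSize {V1 V2 : Type*} (E1 : V1 → V1 → Prop) (E2 : V2 → V2 → Prop)
    (n : ℕ) : Prop :=
  ∃ (E : Fin n → Fin n → Prop) (r : Fin n), IsRootedTree E r ∧
    (∃ f : Fin n → V1, IsMinorEmb E E1 f) ∧ (∃ g : Fin n → V2, IsMinorEmb E E2 g)

/-- There is a common supertree of `T₁` and `T₂` with `n` nodes. -/
def CommonSupSize {V1 V2 : Type*} (E1 : V1 → V1 → Prop) (E2 : V2 → V2 → Prop)
    (n : ℕ) : Prop :=
  ∃ (E : Fin n → Fin n → Prop) (r : Fin n), IsRootedTree E r ∧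
    (∃ f : V1 → Fin n, IsMinorEmb E1 E f) ∧ (∃ g : V2 → Fin n, IsMinorEmb E2 E g)


section Aux

lemma isPath_map {V W : Type*} {E : V → V → Prop} {E' : W → W → Prop} {g : V → W}
    (hg : ∀ a b, E a b → E' (g a) (g b)) {p : List V} {a b : V}
    (h : IsPath E p a b) : IsPath E' (p.map g) (g a) (g b) := by
  obtain ⟨hc, hh, hl⟩ := h
  refine ⟨List.isChain_map_of_isChain _ hg hc, ?_, ?_⟩
  · simp [List.head?_map, hh]
  · simp [List.getLast?_map, hl]

/-- Transport a rooted tree structure along an equivalence. -/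
lemma isRootedTree_equiv {V X : Type*} [Fintype V] [Fintype X] {E : V → V → Prop} {r : V}
    (h : IsRootedTree E r) (e : V ≃ X) :
    IsRootedTree (fun a b => E (e.symm a) (e.symm b)) (e r) := by
  constructor
  · intro v hv; exact h.no_self _ hv
  · intro v
    obtain ⟨p, hp⟩ := h.reach (e.symm v)
    refine ⟨p.map e, ?_⟩
    have := isPath_map (E' := fun a b => E (e.symm a) (e.symm b)) (g := e)
      (by intro a b hab; simpa using hab) hp
    simpa using this
  · intro v p q hp hq
    have hmap : ∀ s : List X, IsPath (fun a b => E (e.symm a) (e.symm b)) s (e r) v →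
        IsPath E (s.map e.symm) r (e.symm v) := by
      intro s hs
      have := isPath_map (E := fun a b => E (e.symm a) (e.symm b)) (E' := E) (g := e.symm)
        (fun a b hab => hab) hs
      simpa using this
    have := h.path_unique (e.symm v) _ _ (hmap p hp) (hmap q hq)
    exact List.map_injective_iff.2 e.symm.injective this

/-- Transport the codomain of a minor embedding along an equivalence. -/
lemma isMinorEmb_equiv {A W X : Type*} {E0 : A → A → Prop} {E : W → W → Prop} {f : A → W}
    (h : IsMinorEmb E0 E f) (e : W ≃ X) :
    IsMinorEmb E0 (fun a b => E (e.symm a) (e.symm b)) (fun a => e (f a)) := by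
  obtain ⟨hinj, harc⟩ := h
  refine ⟨fun a b hab => hinj (e.injective hab), ?_⟩
  intro a b hab
  obtain ⟨p, hp, hint⟩ := harc a b hab
  refine ⟨p.map e, ?_, ?_⟩
  · exact isPath_map (by intro x y hxy; simpa using hxy) hp
  · intro x hx hxr
    rw [← List.map_tail, ← List.map_dropLast] at hx
    obtain ⟨y, hy, rfl⟩ := List.mem_map.1 hx
    obtain ⟨c, hc⟩ := hxr
    exact hint y hy ⟨c, e.injective hc⟩

variable {V1 V2 : Type*} (E1 : V1 → V1 → Prop) (r1 : V1) (E2 : V2 → V2 → Prop) (r2 : V2)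

/-- The combined tree: a fresh root `none` with `T₁` and `T₂` hanging below. -/
def bigE : Option (V1 ⊕ V2) → Option (V1 ⊕ V2) → Prop
  | none, some (Sum.inl b) => b = r1
  | none, some (Sum.inr b) => b = r2
  | some (Sum.inl a), some (Sum.inl b) => E1 a b
  | some (Sum.inr a), some (Sum.inr b) => E2 a b
  | _, _ => False

variable {E1 r1 E2 r2}

lemma bigE_inl {a b : V1} : bigE E1 r1 E2 r2 (some (Sum.inl a)) (some (Sum.inl b)) ↔ E1 a b :=
  Iff.rfl

lemma bigE_inr {a b : V2} : bigE E1 r1 E2 r2 (some (Sum.inr a)) (some (Sum.inr b)) ↔ E2 a b :=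
  Iff.rfl

lemma bigE_from_inl {a : V1} {b : Option (V1 ⊕ V2)} (h : bigE E1 r1 E2 r2 (some (Sum.inl a)) b) :
    ∃ c, b = some (Sum.inl c) ∧ E1 a c := by
  match b with
  | none => exact absurd h (by simp [bigE])
  | some (Sum.inl c) => exact ⟨c, rfl, h⟩
  | some (Sum.inr c) => exact absurd h (by simp [bigE])

lemma bigE_from_inr {a : V2} {b : Option (V1 ⊕ V2)} (h : bigE E1 r1 E2 r2 (some (Sum.inr a)) b) :
    ∃ c, b = some (Sum.inr c) ∧ E2 a c := by
  match b with
  | none => exact absurd h (by simp [bigE])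
  | some (Sum.inr c) => exact ⟨c, rfl, h⟩
  | some (Sum.inl c) => exact absurd h (by simp [bigE])

/-- A chain starting in the left component stays in the left component. -/
lemma bigE_stay_inl (l : List (Option (V1 ⊕ V2))) : l.Chain' (bigE E1 r1 E2 r2) →
    ∀ a : V1, l.head? = some (some (Sum.inl a)) →
    ∃ p : List V1, p.head? = some a ∧ l = p.map (fun v => some (Sum.inl v)) := by
  induction l with
  | nil => intro _ a h; simp at h
  | cons x xs ih =>
    intro hc a h
    have hx : x = some (Sum.inl a) := by simpa using h
    subst hx
    cases xs with
    | nil => exact ⟨[a], rfl, by simp⟩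
    | cons y ys =>
      have hrel : bigE E1 r1 E2 r2 (some (Sum.inl a)) y := (List.isChain_cons.1 hc).1 y rfl
      obtain ⟨c, hy, _⟩ := bigE_from_inl hrel
      subst hy
      obtain ⟨p, hp, hmap⟩ := ih hc.tail c (by simp)
      exact ⟨a :: p, rfl, by rw [List.map_cons, ← hmap]⟩

lemma bigE_stay_inr (l : List (Option (V1 ⊕ V2))) : l.Chain' (bigE E1 r1 E2 r2) →
    ∀ a : V2, l.head? = some (some (Sum.inr a)) →
    ∃ p : List V2, p.head? = some a ∧ l = p.map (fun v => some (Sum.inr v)) := by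
  induction l with
  | nil => intro _ a h; simp at h
  | cons x xs ih =>
    intro hc a h
    have hx : x = some (Sum.inr a) := by simpa using h
    subst hx
    cases xs with
    | nil => exact ⟨[a], rfl, by simp⟩
    | cons y ys =>
      have hrel : bigE E1 r1 E2 r2 (some (Sum.inr a)) y := (List.isChain_cons.1 hc).1 y rfl
      obtain ⟨c, hy, _⟩ := bigE_from_inr hrel
      subst hy
      obtain ⟨p, hp, hmap⟩ := ih hc.tail c (by simp)
      exact ⟨a :: p, rfl, by rw [List.map_cons, ← hmap]⟩

/-- Structure of paths from the root in the combined tree. -/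
lemma bigE_path_structure [Fintype V1] [Fintype V2]
    (h1 : IsRootedTree E1 r1) (h2 : IsRootedTree E2 r2)
    {p : List (Option (V1 ⊕ V2))} {t : Option (V1 ⊕ V2)}
    (hp : IsPath (bigE E1 r1 E2 r2) p none t) :
    (t = none ∧ p = [none]) ∨
    (∃ v q, t = some (Sum.inl v) ∧ IsPath E1 q r1 v ∧
      p = none :: q.map (fun v => some (Sum.inl v))) ∨
    (∃ v q, t = some (Sum.inr v) ∧ IsPath E2 q r2 v ∧
      p = none :: q.map (fun v => some (Sum.inr v))) := by
  obtain ⟨hc, hh, hl⟩ := hp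
  match p, hh with
  | none :: rest, _ =>
    match rest with
    | [] =>
      left
      simp only [List.getLast?_singleton, Option.some.injEq] at hl
      exact ⟨hl.symm, rfl⟩
    | x :: ys =>
      have hrel : bigE E1 r1 E2 r2 none x := (List.isChain_cons.1 hc).1 x rfl
      have hlast : (x :: ys).getLast? = some t := by
        rw [← hl, List.getLast?_cons_cons]
      match x, hrel with
      | some (Sum.inl b), hrel =>
        have hb : b = r1 := hrel
        obtain ⟨q, hqh, hqmap⟩ := bigE_stay_inl (some (Sum.inl b) :: ys)
          (List.isChain_cons.1 hc).2 b (by simp)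
        rw [hb] at hqh
        right; left
        rw [hqmap] at hlast
        rw [List.getLast?_map] at hlast
        match hq : q.getLast?, hlast with
        | none, hlast => exact absurd hlast (by simp)
        | some w, hlast =>
          have ht : t = some (Sum.inl w) := by simpa using hlast.symm
          have hchain : q.Chain' E1 := by
            have := (List.isChain_cons.1 hc).2
            rw [hqmap] at this
            exact ((List.isChain_map (fun v : V1 => some (Sum.inl v))).1 this).imp
              (fun a b h => h)
          exact ⟨w, q, ht, ⟨hchain, hqh, hq⟩, by rw [hqmap]⟩
      | some (Sum.inr b), hrel =>
        have hb : b = r2 := hrel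
        obtain ⟨q, hqh, hqmap⟩ := bigE_stay_inr (some (Sum.inr b) :: ys)
          (List.isChain_cons.1 hc).2 b (by simp)
        rw [hb] at hqh
        right; right
        rw [hqmap] at hlast
        rw [List.getLast?_map] at hlast
        match hq : q.getLast?, hlast with
        | none, hlast => exact absurd hlast (by simp)
        | some w, hlast =>
          have ht : t = some (Sum.inr w) := by simpa using hlast.symm
          have hchain : q.Chain' E2 := by
            have := (List.isChain_cons.1 hc).2
            rw [hqmap] at this
            exact ((List.isChain_map (fun v : V2 => some (Sum.inr v))).1 this).imp
              (fun a b h => h)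
          exact ⟨w, q, ht, ⟨hchain, hqh, hq⟩, by rw [hqmap]⟩

lemma bigE_isRootedTree [Fintype V1] [Fintype V2]
    (h1 : IsRootedTree E1 r1) (h2 : IsRootedTree E2 r2) :
    IsRootedTree (bigE E1 r1 E2 r2) (none : Option (V1 ⊕ V2)) := by
  constructor
  · rintro (_ | a | a)
    · simp [bigE]
    · exact fun h => h1.no_self _ h
    · exact fun h => h2.no_self _ h
  · rintro (_ | v | v)
    · exact ⟨[none], List.isChain_singleton _, rfl, rfl⟩
    · obtain ⟨q, hqc, hqh, hql⟩ := h1.reach v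
      refine ⟨none :: q.map (fun v => some (Sum.inl v)), ?_, rfl, ?_⟩
      · refine List.isChain_cons.2 ⟨?_, ?_⟩
        · intro y hy
          rw [List.head?_map, hqh] at hy
          simp only [Option.map_some, Option.mem_def, Option.some.injEq] at hy
          subst hy; exact rfl
        · exact List.isChain_map_of_isChain (fun v : V1 => some (Sum.inl v))
            (fun a b h => h) hqc
      · rw [List.getLast?_cons, List.getLast?_map, hql]
        rfl
    · obtain ⟨q, hqc, hqh, hql⟩ := h2.reach v
      refine ⟨none :: q.map (fun v => some (Sum.inr v)), ?_, rfl, ?_⟩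
      · refine List.isChain_cons.2 ⟨?_, ?_⟩
        · intro y hy
          rw [List.head?_map, hqh] at hy
          simp only [Option.map_some, Option.mem_def, Option.some.injEq] at hy
          subst hy; exact rfl
        · exact List.isChain_map_of_isChain (fun v : V2 => some (Sum.inr v))
            (fun a b h => h) hqc
      · rw [List.getLast?_cons, List.getLast?_map, hql]
        rfl
  · intro v p q hp hq
    rcases bigE_path_structure h1 h2 hp with ⟨rfl, rfl⟩ | ⟨w, s, rfl, hs, rfl⟩ | ⟨w, s, rfl, hs, rfl⟩ <;>
      rcases bigE_path_structure h1 h2 hq with ⟨ht, rfl⟩ | ⟨w', s', ht, hs', rfl⟩ |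
        ⟨w', s', ht, hs', rfl⟩
    · rfl
    · exact absurd ht (by simp)
    · exact absurd ht (by simp)
    · exact absurd ht (by simp)
    · obtain rfl : w = w' := by simpa using ht
      rw [h1.path_unique w s s' hs hs']
    · exact absurd ht (by simp)
    · exact absurd ht (by simp)
    · exact absurd ht (by simp)
    · obtain rfl : w = w' := by simpa using ht
      rw [h2.path_unique w s s' hs hs']

lemma bigE_minorEmb_left [Fintype V1] [Fintype V2] :
    IsMinorEmb E1 (bigE E1 r1 E2 r2) (fun v : V1 => (some (Sum.inl v) : Option (V1 ⊕ V2))) := by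
  refine ⟨fun a b h => by simpa using h, ?_⟩
  intro a b hab
  exact ⟨[some (Sum.inl a), some (Sum.inl b)],
    ⟨List.IsChain.cons_cons hab (List.isChain_singleton _), rfl, rfl⟩, by simp⟩

lemma bigE_minorEmb_right [Fintype V1] [Fintype V2] :
    IsMinorEmb E2 (bigE E1 r1 E2 r2) (fun v : V2 => (some (Sum.inr v) : Option (V1 ⊕ V2))) := by
  refine ⟨fun a b h => by simpa using h, ?_⟩
  intro a b hab
  exact ⟨[some (Sum.inr a), some (Sum.inr b)],
    ⟨List.IsChain.cons_cons hab (List.isChain_singleton _), rfl, rfl⟩, by simp⟩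

end Aux

/-- A smallest common supertree of `T₁` and `T₂` under minor embeddings has at most
`|V(T₁)| + |V(T₂)| + 1` nodes. -/
theorem stmt15 {V1 V2 Vsig : Type*} [Fintype V1] [Fintype V2] [Fintype Vsig]
    (E1 : V1 → V1 → Prop) (r1 : V1) (E2 : V2 → V2 → Prop) (r2 : V2)
    (Esig : Vsig → Vsig → Prop) (rsig : Vsig)
    (h1 : IsRootedTree E1 r1) (h2 : IsRootedTree E2 r2)
    (hsig : IsRootedTree Esig rsig)
    (f1 : V1 → Vsig) (f2 : V2 → Vsig)
    (hf1 : IsMinorEmb E1 Esig f1) (hf2 : IsMinorEmb E2 Esig f2)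
    (hsigMin : ∀ m : ℕ, CommonSupSize E1 E2 m → Fintype.card Vsig ≤ m) :
    Fintype.card Vsig ≤ Fintype.card V1 + Fintype.card V2 + 1 := by
  set W := Option (V1 ⊕ V2) with hW
  let e : W ≃ Fin (Fintype.card W) := Fintype.equivFin W
  have hsup : CommonSupSize E1 E2 (Fintype.card W) := by
    refine ⟨fun a b => bigE E1 r1 E2 r2 (e.symm a) (e.symm b), e none, ?_, ?_, ?_⟩
    · exact isRootedTree_equiv (bigE_isRootedTree h1 h2) e
    · exact ⟨_, isMinorEmb_equiv bigE_minorEmb_left e⟩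
    · exact ⟨_, isMinorEmb_equiv bigE_minorEmb_right e⟩
  have := hsigMin _ hsup
  have hcard : Fintype.card W = Fintype.card V1 + Fintype.card V2 + 1 := by
    simp [hW, Fintype.card_option, Fintype.card_sum]
  omega
end
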